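/- Let s > 0, A ∈ ℝ, and λ ≥ 0, and define h : ℝ → ℝ by h(x) = s·x² + A·x + λ²·(1 if x ≠ 0 else 0). If λ² ≤ A²/(4s), then x̂ = −A/(2s) is a global minimizer of h, i.e., h(−A/(2s)) ≤ h(x) for all x ∈ ℝ; if λ² > A²/(4s), then 0 is the unique global minimizer of h, i.e., h(0) < h(x) for all x ≠ 0. -/

import Mathlib

/-- Proposition 1 (off-diagonal case): minimizing
`h(x) = s x² + A x + λ² · 𝟙[x ≠ 0]` over `x ∈ ℝ`.
If `λ² ≤ A²/(4s)` then `x̂ = -A/(2s)` is a global minimizer; if `λ² > A²/(4s)`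
then `0` is the unique global minimizer. -/
theorem stmt_0 (s A lam : ℝ) (hs : 0 < s) (hlam : 0 ≤ lam)
    (h : ℝ → ℝ)
    (hh : ∀ x : ℝ, h x = s * x ^ 2 + A * x + lam ^ 2 * (if x ≠ 0 then 1 else 0)) :
    (lam ^ 2 ≤ A ^ 2 / (4 * s) → ∀ x : ℝ, h (-A / (2 * s)) ≤ h x) ∧
    (lam ^ 2 > A ^ 2 / (4 * s) → ∀ x : ℝ, x ≠ 0 → h 0 < h x) := by
  have hs' : (4 * s) ≠ 0 := by positivity
  have hkey : A ^ 2 / (4 * s) * (4 * s) = A ^ 2 := div_mul_cancel₀ _ hs'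
  constructor
  · intro hle x
    rw [hh, hh]
    rw [le_div_iff₀ (by positivity)] at hle
    by_cases hx : x = 0 <;> by_cases hm : -A / (2 * s) = 0 <;>
      simp only [hx, hm, ne_eq, not_true_eq_false, not_false_eq_true, if_true, if_false,
        ite_true, ite_false]
    · have : A = 0 := by
        field_simp at hm
        simpa using hm
      simp [this]
    · subst hx
      have hA : A ≠ 0 := by
        intro hA0; apply hm; simp [hA0]
      have h1 : s * (-A / (2 * s)) ^ 2 + A * (-A / (2 * s)) = -(A ^ 2 / (4 * s)) := by
        field_simp; ring
      have hlel : lam ^ 2 ≤ A ^ 2 / (4 * s) := (le_div_iff₀ (by positivity)).2 hle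
      rw [h1]
      linarith
    · have : A = 0 := by field_simp at hm; simpa using hm
      subst this
      nlinarith [sq_nonneg x, sq_nonneg lam]
    · have h1 : s * (-A / (2 * s)) ^ 2 + A * (-A / (2 * s)) = -(A ^ 2) / (4 * s) := by
        field_simp; ring
      have h2 : -(A ^ 2) / (4 * s) = -(A ^ 2 / (4 * s)) := by ring
      rw [h1, h2]
      nlinarith [hkey, sq_nonneg (2 * s * x + A)]
  · intro hgt x hx
    rw [hh, hh]
    simp only [hx, ne_eq, not_true_eq_false, not_false_eq_true, if_true, if_false, ite_true]
    rw [gt_iff_lt, div_lt_iff₀ (by positivity)] at hgt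
    have := sq_nonneg (2 * s * x + A)
    nlinarith
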